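/- For 2k-1 voters with rankings chosen independently and uniformly at random among all n! rankings of n alternatives, the probability that a given fixed alternative A_1 is a Condorcet winner equals ∫_{[0,1]^{2k-1}} (1 - Q(x_1,…,x_{2k-1}))^{n-1} dx_1⋯dx_{2k-1}, where Q(x_1,…,x_{2k-1}) = ∑_{S ⊆ [2k-1], |S| ≥ k} ∏_{i∈S} x_i ∏_{i∉S}(1-x_i). -/

import Mathlib

open Finset MeasureTheory

/-- The probability that `2k-1` i.i.d. uniform points `y i ∈ [0,1]` satisfy `y i < x i`
for at least `k` indices, written as a sum over the subsets `S` of indices `i`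
with `y i < x i`. -/
def Qsum (k : ℕ) (x : Fin (2*k-1) → ℝ) : ℝ :=
  ∑ S ∈ (univ : Finset (Fin (2*k-1))).powerset.filter (fun S => k ≤ S.card),
    (∏ i ∈ S, x i) * ∏ i ∈ univ \ S, (1 - x i)

section CondorcetCounting
open Equiv
variable {n : ℕ} (z : Fin n)

open Classical in
noncomputable def cntSet (z : Fin n) (S : Finset (Fin n)) : Finset (Perm (Fin n)) :=
  univ.filter (fun σ => ∀ b, (σ z < σ b ↔ b ∈ S))

open Classical in
lemma cntSet_empty_of_mem {S : Finset (Fin n)} (h : z ∈ S) : cntSet z S = ∅ := by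
  ext σ
  simp only [cntSet, mem_filter, mem_univ, true_and, Finset.notMem_empty, iff_false]
  intro hσ
  exact absurd ((hσ z).2 h) (lt_irrefl _)

open Classical in
lemma card_sigma_level (v : Fin n) :
    (univ.filter (fun σ : Perm (Fin n) => σ z = v)).card = (n-1).factorial := by
  have key : ∀ v w : Fin n, (univ.filter (fun σ : Perm (Fin n) => σ z = v)).card
      = (univ.filter (fun σ : Perm (Fin n) => σ z = w)).card := by
    intro v w
    apply Finset.card_bij' (fun σ _ => Equiv.swap v w * σ) (fun σ _ => Equiv.swap v w * σ)
    · intro σ hσ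
      simp only [mem_filter, mem_univ, true_and] at hσ ⊢
      simp [Perm.mul_apply, hσ, Equiv.swap_apply_left]
    · intro σ hσ
      simp only [mem_filter, mem_univ, true_and] at hσ ⊢
      simp [Perm.mul_apply, hσ, Equiv.swap_apply_right]
    · intro σ _; ext x; simp [Perm.mul_apply]
    · intro σ _; ext x; simp [Perm.mul_apply]
  have hsum : ∑ v : Fin n, (univ.filter (fun σ : Perm (Fin n) => σ z = v)).card
      = n.factorial := by
    have h0 := Finset.card_eq_sum_card_fiberwise (f := fun σ : Perm (Fin n) => σ z)
      (s := univ) (t := univ) (fun x _ => mem_univ _)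
    rw [Finset.card_univ, Fintype.card_perm, Fintype.card_fin] at h0
    exact h0.symm
  have hconst : ∑ w : Fin n, (univ.filter (fun σ : Perm (Fin n) => σ z = w)).card
      = n * (univ.filter (fun σ : Perm (Fin n) => σ z = v)).card := by
    rw [Finset.sum_congr rfl (fun w _ => key w v), Finset.sum_const, Finset.card_univ,
      Fintype.card_fin, smul_eq_mul]
  have hn : 0 < n := z.pos
  exact Nat.eq_of_mul_eq_mul_left hn
    ((hconst.symm.trans hsum).trans (Nat.mul_factorial_pred hn.ne').symm)

open Classical in
noncomputable def Sof (z : Fin n) (σ : Perm (Fin n)) : Finset (Fin n) :=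
  univ.filter (fun b => σ z < σ b)

open Classical in
lemma card_Sof (σ : Perm (Fin n)) : (Sof z σ).card = n - 1 - (σ z : ℕ) := by
  have h1 : Sof z σ = (Finset.Ioi (σ z)).image σ.symm := by
    ext b
    simp only [Sof, mem_filter, mem_univ, true_and, Finset.mem_image, Finset.mem_Ioi]
    constructor
    · intro hb; exact ⟨σ b, hb, σ.symm_apply_apply b⟩
    · rintro ⟨v, hv, rfl⟩; simpa using hv
  rw [h1, Finset.card_image_of_injective _ σ.symm.injective, Fin.card_Ioi]

open Classical in
lemma mem_cntSet_iff (σ : Perm (Fin n)) (S : Finset (Fin n)) :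
    σ ∈ cntSet z S ↔ Sof z σ = S := by
  simp only [cntSet, mem_filter, mem_univ, true_and]
  constructor
  · intro h; ext b; simp only [Sof, mem_filter, mem_univ, true_and]; exact h b
  · intro h b; rw [← h]; simp [Sof]

open Classical in
lemma card_cntSet_eq_of_card_eq {S T : Finset (Fin n)} (hS : z ∉ S) (hT : z ∉ T)
    (h : S.card = T.card) : (cntSet z S).card = (cntSet z T).card := by
  obtain ⟨τ, hz, hmem⟩ : ∃ τ : Perm (Fin n), τ z = z ∧ ∀ b, b ∈ S ↔ τ b ∈ T := by
    have hcard : Fintype.card {x : Fin n // x ∈ S} = Fintype.card {x : Fin n // x ∈ T} := by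
      simpa [Fintype.card_coe] using h
    let e : {x : Fin n // x ∈ S} ≃ {x : Fin n // x ∈ T} := Fintype.equivOfCardEq hcard
    have hπ1 : ∀ b, b ∈ S → e.extendSubtype b ∈ T := fun b hb => e.extendSubtype_mem b hb
    have hπ2 : ∀ b, b ∉ S → e.extendSubtype b ∉ T := fun b hb => e.extendSubtype_not_mem b hb
    set π := e.extendSubtype with hπ
    refine ⟨(Equiv.swap (π z) z) * π, ?_, ?_⟩
    · simp [Perm.mul_apply, Equiv.swap_apply_left]
    · intro b
      constructor
      · intro hb
        have h1 : π b ∈ T := hπ1 b hb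
        have hbz : b ≠ z := fun he => hS (he ▸ hb)
        have h2 : π b ≠ π z := fun he => hbz (π.injective he)
        have h3 : π b ≠ z := fun he => hT (he ▸ h1)
        rw [Perm.mul_apply, Equiv.swap_apply_of_ne_of_ne h2 h3]
        exact h1
      · intro hb; by_contra hbS
        have h1 : π b ∉ T := hπ2 b hbS
        rcases eq_or_ne (π b) (π z) with he | he
        · rw [Perm.mul_apply, he, Equiv.swap_apply_left] at hb; exact hT hb
        rcases eq_or_ne (π b) z with he2 | he2
        · rw [Perm.mul_apply, he2, Equiv.swap_apply_right] at hb
          exact (hπ2 z hS) hb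
        · rw [Perm.mul_apply, Equiv.swap_apply_of_ne_of_ne he he2] at hb; exact h1 hb
  have hτz : τ⁻¹ z = z := by conv_lhs => rw [← hz, (show τ⁻¹ (τ z) = z from τ.symm_apply_apply z)]
  apply Finset.card_bij' (fun σ _ => σ * τ⁻¹) (fun σ _ => σ * τ)
  · intro σ hσ
    simp only [cntSet, mem_filter, mem_univ, true_and] at hσ ⊢
    intro b
    have h1 := hσ (τ⁻¹ b)
    rw [hmem (τ⁻¹ b), (show τ (τ⁻¹ b) = b from τ.apply_symm_apply b)] at h1
    simpa [Perm.mul_apply, hτz] using h1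
  · intro σ hσ
    simp only [cntSet, mem_filter, mem_univ, true_and] at hσ ⊢
    intro b
    rw [Perm.mul_apply, Perm.mul_apply, hz]
    rw [hσ (τ b), ← hmem b]
  · intro σ _; ext x; simp
  · intro σ _; ext x; simp

open Classical in
lemma card_cntSet {S : Finset (Fin n)} (hS : z ∉ S) :
    (cntSet z S).card = S.card.factorial * (n - 1 - S.card).factorial := by
  set a := S.card with ha_def
  have hSsub : S ⊆ univ.erase z := fun x hx =>
    mem_erase.2 ⟨fun he => hS (he ▸ hx), mem_univ x⟩
  have hcard_erase : (univ.erase z).card = n - 1 := by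
    rw [card_erase_of_mem (mem_univ z), card_univ, Fintype.card_fin]
  have ha : a ≤ n - 1 := by rw [← hcard_erase]; exact card_le_card hSsub
  have hn : 0 < n := z.pos
  have hv : n - 1 - a < n := by omega
  set v : Fin n := ⟨n - 1 - a, hv⟩ with hv_def
  have hSof_z : ∀ σ : Perm (Fin n), σ z = v ↔ (Sof z σ).card = a := by
    intro σ
    rw [card_Sof]
    constructor
    · intro h; rw [h]; simp [hv_def]; omega
    · intro h
      have : (σ z : ℕ) ≤ n - 1 := by omega
      apply Fin.ext
      simp only [hv_def]
      omega
  have hpart : (univ.filter (fun σ : Perm (Fin n) => σ z = v)).card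
      = ∑ S' ∈ powersetCard a (univ.erase z), (cntSet z S').card := by
    rw [Finset.card_eq_sum_card_fiberwise (f := Sof z) (t := powersetCard a (univ.erase z)) ?_]
    · apply Finset.sum_congr rfl
      intro S' hS'
      congr 1
      ext σ
      simp only [mem_filter, mem_univ, true_and, mem_cntSet_iff]
      rw [mem_powersetCard] at hS'
      constructor
      · rintro ⟨_, h2⟩; exact h2
      · intro h2
        refine ⟨?_, h2⟩
        rw [hSof_z, h2, hS'.2]
    · intro σ hσ
      simp only [Finset.mem_coe, mem_filter, mem_univ, true_and] at hσ
      rw [Finset.mem_coe, mem_powersetCard]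
      constructor
      · intro b hb
        simp only [Sof, mem_filter, mem_univ, true_and] at hb
        exact mem_erase.2 ⟨fun he => by rw [he] at hb; exact lt_irrefl _ hb, mem_univ b⟩
      · exact (hSof_z σ).1 hσ
  have hall : ∀ S' ∈ powersetCard a (univ.erase z), (cntSet z S').card = (cntSet z S).card := by
    intro S' hS'
    rw [mem_powersetCard] at hS'
    have hzS' : z ∉ S' := fun h => (mem_erase.1 (hS'.1 h)).1 rfl
    exact card_cntSet_eq_of_card_eq z hzS' hS (hS'.2.trans ha_def)
  have hkey : (n-1).factorial = (n-1).choose a * (cntSet z S).card := by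
    rw [← card_sigma_level z v, hpart, Finset.sum_congr rfl hall, Finset.sum_const,
      smul_eq_mul, Finset.card_powersetCard, hcard_erase]
  have hid := Nat.choose_mul_factorial_mul_factorial ha
  have hpos := Nat.choose_pos ha
  apply Nat.eq_of_mul_eq_mul_left hpos
  calc (n-1).choose a * (cntSet z S).card = (n-1).factorial := hkey.symm
    _ = (n-1).choose a * (a.factorial * (n-1-a).factorial) := by rw [← hid, mul_assoc]

open Classical in
lemma fiber_card (m : ℕ) (g : Fin n → Finset (Fin m)) :
    (univ.filter (fun prof : Fin m → Perm (Fin n) =>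
      ∀ b, univ.filter (fun i => prof i z < prof i b) = g b)).card
    = ∏ i : Fin m, (cntSet z (univ.filter (fun b => i ∈ g b))).card := by
  rw [← Fintype.card_piFinset]
  congr 1
  ext prof
  simp only [Fintype.mem_piFinset, mem_filter, mem_univ, true_and, cntSet]
  constructor
  · intro h i b
    rw [← h b, mem_filter]
    simp
  · intro h b
    ext i
    simp only [mem_filter, mem_univ, true_and]
    exact h i b

open Classical in
lemma count_good (m k : ℕ) :
    ((univ : Finset (Fin m → Perm (Fin n))).filter
      (fun prof => ∀ b : Fin n, b ≠ z →
        k ≤ (univ.filter (fun i => prof i z < prof i b)).card)).card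
    = ∑ g ∈ (univ : Finset (Fin n → Finset (Fin m))).filter
        (fun g => ∀ b, b ≠ z → k ≤ (g b).card),
        ∏ i : Fin m, (cntSet z (univ.filter (fun b => i ∈ g b))).card := by
  rw [Finset.card_eq_sum_card_fiberwise
    (f := fun prof b => univ.filter (fun i => prof i z < prof i b))
    (t := (univ : Finset (Fin n → Finset (Fin m))).filter
        (fun g => ∀ b, b ≠ z → k ≤ (g b).card)) ?_]
  · apply Finset.sum_congr rfl
    intro g hg
    rw [← fiber_card]
    congr 1
    ext prof
    simp only [mem_filter, mem_univ, true_and] at hg ⊢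
    constructor
    · rintro ⟨_, h2⟩
      intro b; exact congrFun h2 b
    · intro h2
      refine ⟨fun b hb => ?_, funext h2⟩
      rw [h2 b]
      exact hg b hb
  · intro prof hprof
    simp only [Finset.mem_coe, mem_filter, mem_univ, true_and] at hprof ⊢
    exact hprof

open Classical in
lemma match_sums (m k : ℕ) :
    ∑ g ∈ (univ : Finset (Fin n → Finset (Fin m))).filter
        (fun g => ∀ b, b ≠ z → k ≤ (g b).card),
      ∏ i : Fin m, (cntSet z (univ.filter (fun b => i ∈ g b))).card
    = ∑ p ∈ Fintype.piFinset (fun _ : {b : Fin n // b ≠ z} =>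
        (univ : Finset (Fin m)).powerset.filter (fun T => k ≤ T.card)),
      ∏ i : Fin m, ((univ.filter (fun b : {b : Fin n // b ≠ z} => i ∈ p b)).card.factorial
        * ((n-1) - (univ.filter (fun b : {b : Fin n // b ≠ z} => i ∈ p b)).card).factorial) := by
  rw [← Finset.sum_filter_add_sum_filter_not
    ((univ : Finset (Fin n → Finset (Fin m))).filter
      (fun g => ∀ b, b ≠ z → k ≤ (g b).card)) (fun g => g z = ∅)]
  have hzero : ∑ g ∈ ((univ : Finset (Fin n → Finset (Fin m))).filter
      (fun g => ∀ b, b ≠ z → k ≤ (g b).card)).filter (fun g => ¬ g z = ∅),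
      ∏ i : Fin m, (cntSet z (univ.filter (fun b => i ∈ g b))).card = 0 := by
    apply Finset.sum_eq_zero
    intro g hg
    simp only [Finset.mem_filter] at hg
    obtain ⟨i, hi⟩ := Finset.nonempty_iff_ne_empty.2 hg.2
    apply Finset.prod_eq_zero (Finset.mem_univ i)
    rw [cntSet_empty_of_mem z (by simp [hi] : z ∈ univ.filter (fun b => i ∈ g b))]
    rfl
  rw [hzero, add_zero]
  apply Finset.sum_nbij' (i := fun g (b : {b : Fin n // b ≠ z}) => g b.1)
    (j := fun p b => if h : b = z then ∅ else p ⟨b, h⟩)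
  · intro g hg
    simp only [Finset.mem_filter, Fintype.mem_piFinset] at hg ⊢
    intro b
    exact ⟨Finset.mem_powerset.2 (Finset.subset_univ _), hg.1.2 b.1 b.2⟩
  · intro p hp
    simp only [Finset.mem_filter, Fintype.mem_piFinset] at hp ⊢
    refine ⟨⟨Finset.mem_univ _, fun b hb => ?_⟩, by simp⟩
    rw [dif_neg hb]
    exact (hp ⟨b, hb⟩).2
  · intro g hg
    simp only [Finset.mem_filter] at hg
    funext b
    by_cases hb : b = z
    · rw [dif_pos hb, hb, hg.2]
    · rw [dif_neg hb]
  · intro p hp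
    funext b
    rcases b with ⟨b, hb⟩
    show (if h : b = z then (∅ : Finset (Fin m)) else p ⟨b, h⟩) = p ⟨b, hb⟩
    rw [dif_neg hb]
  · intro g hg
    simp only [Finset.mem_filter] at hg
    apply Finset.prod_congr rfl
    intro i _
    have hznotin : z ∉ univ.filter (fun b => i ∈ g b) := by
      simp [hg.2]
    rw [card_cntSet z hznotin]
    have hcardeq : (univ.filter (fun b : {b : Fin n // b ≠ z} => i ∈ g b.1)).card
        = (univ.filter (fun b : Fin n => i ∈ g b)).card := by
      refine Finset.card_bij (fun b _ => (b : Fin n)) ?_ ?_ ?_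
      · intro b hb
        simp only [Finset.mem_filter, Finset.mem_univ, true_and] at hb ⊢
        exact hb
      · intro b1 h1 b2 h2 heq
        exact Subtype.ext heq
      · intro b hb
        simp only [Finset.mem_filter, Finset.mem_univ, true_and] at hb
        have hbz : b ≠ z := fun he => by
          rw [he, hg.2] at hb
          exact absurd hb (Finset.notMem_empty i)
        refine ⟨⟨b, hbz⟩, ?_, rfl⟩
        simp [hb]
    rw [← hcardeq]

end CondorcetCounting
lemma one_sub_Qsum (k : ℕ) (hk : 1 ≤ k) (x : Fin (2*k-1) → ℝ) :
    1 - Qsum k x = ∑ T ∈ (univ : Finset (Fin (2*k-1))).powerset.filter (fun T => k ≤ T.card),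
      (∏ i ∈ T, (1 - x i)) * ∏ i ∈ univ \ T, x i := by
  have h1 : ∑ S ∈ (univ : Finset (Fin (2*k-1))).powerset,
      (∏ i ∈ S, x i) * ∏ i ∈ univ \ S, (1 - x i) = 1 := by
    rw [← Finset.prod_add]
    simp
  have h2 := Finset.sum_filter_add_sum_filter_not (univ : Finset (Fin (2*k-1))).powerset
    (fun S => k ≤ S.card) (fun S => (∏ i ∈ S, x i) * ∏ i ∈ univ \ S, (1 - x i))
  have h3 : 1 - Qsum k x = ∑ S ∈ (univ : Finset (Fin (2*k-1))).powerset.filter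
      (fun S => ¬ k ≤ S.card), (∏ i ∈ S, x i) * ∏ i ∈ univ \ S, (1 - x i) := by
    rw [Qsum]; linarith [h1, h2]
  rw [h3]
  have hm : ∀ S : Finset (Fin (2*k-1)), S.card ≤ 2*k-1 := fun S => by
    simpa using Finset.card_le_univ S
  have hdiffcard : ∀ S : Finset (Fin (2*k-1)), (univ \ S).card = (2*k-1) - S.card := by
    intro S
    rw [Finset.card_sdiff_of_subset (Finset.subset_univ S), Finset.card_univ, Fintype.card_fin]
  apply Finset.sum_nbij' (i := fun S => univ \ S) (j := fun T => univ \ T)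
  · intro S hS
    simp only [Finset.mem_filter, Finset.mem_powerset] at hS ⊢
    refine ⟨Finset.subset_univ _, ?_⟩
    rw [hdiffcard]
    have := hm S
    omega
  · intro T hT
    simp only [Finset.mem_filter, Finset.mem_powerset] at hT ⊢
    refine ⟨Finset.subset_univ _, ?_⟩
    rw [hdiffcard]
    have := hm T
    omega
  · intro S _; simp [Finset.sdiff_sdiff_self_left]
  · intro T _; simp [Finset.sdiff_sdiff_self_left]
  · intro S _
    rw [Finset.sdiff_sdiff_self_left, Finset.univ_inter, mul_comm]

open Classical in
lemma integrand_expand (n k : ℕ) (hk : 1 ≤ k) (z : Fin n) (x : Fin (2*k-1) → ℝ) :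
    (1 - Qsum k x)^(n-1)
    = ∑ p ∈ Fintype.piFinset (fun _ : {b : Fin n // b ≠ z} =>
        (univ : Finset (Fin (2*k-1))).powerset.filter (fun T => k ≤ T.card)),
      ∏ i : Fin (2*k-1),
        ((1 - x i)^((univ.filter (fun b : {b : Fin n // b ≠ z} => i ∈ p b)).card)
          * (x i)^((n-1) - (univ.filter (fun b : {b : Fin n // b ≠ z} => i ∈ p b)).card)) := by
  have hcard : Fintype.card {b : Fin n // b ≠ z} = n - 1 := by
    have h1 := Fintype.card_subtype_compl (fun b : Fin n => b = z)
    rw [Fintype.card_subtype_eq, Fintype.card_fin] at h1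
    exact h1
  have hpow : (1 - Qsum k x)^(n-1) = ∏ _b : {b : Fin n // b ≠ z}, (1 - Qsum k x) := by
    rw [Finset.prod_const, Finset.card_univ, hcard]
  rw [hpow]
  have hexp : ∀ _b : {b : Fin n // b ≠ z}, 1 - Qsum k x
      = ∑ T ∈ (univ : Finset (Fin (2*k-1))).powerset.filter (fun T => k ≤ T.card),
        (∏ i ∈ T, (1 - x i)) * ∏ i ∈ univ \ T, x i := fun _ => one_sub_Qsum k hk x
  rw [Finset.prod_congr rfl (fun b _ => hexp b), Finset.prod_univ_sum]
  apply Finset.sum_congr rfl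
  intro p _
  have step1 : ∀ T : Finset (Fin (2*k-1)), (∏ i ∈ T, (1 - x i)) * ∏ i ∈ univ \ T, x i
      = ∏ i : Fin (2*k-1), (if i ∈ T then (1 - x i) else x i) := by
    intro T
    rw [Finset.prod_ite]
    congr 1
    · apply Finset.prod_congr _ (fun i _ => rfl)
      ext i; simp
    · apply Finset.prod_congr _ (fun i _ => rfl)
      rw [Finset.sdiff_eq_filter]
  rw [Finset.prod_congr rfl (fun b _ => step1 (p b)), Finset.prod_comm]
  apply Finset.prod_congr rfl
  intro i _
  rw [Finset.prod_ite, Finset.prod_const, Finset.prod_const]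
  have hsum : (univ.filter (fun b : {b : Fin n // b ≠ z} => i ∈ p b)).card
      + (univ.filter (fun b : {b : Fin n // b ≠ z} => i ∉ p b)).card = n - 1 := by
    have h2 := Finset.card_filter_add_card_filter_not
      (s := (univ : Finset {b : Fin n // b ≠ z})) (p := fun b => i ∈ p b)
    simpa [Finset.card_univ, hcard] using h2
  congr 1
  set A := (univ.filter (fun b : {b : Fin n // b ≠ z} => i ∈ p b)).card with hA
  set B := (univ.filter (fun b : {b : Fin n // b ≠ z} => i ∉ p b)).card with hB
  congr 1
  omega
lemma beta_nat (e a : ℕ) : ∫ x in (0:ℝ)..1, x^e * (1-x)^a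
    = (e.factorial * a.factorial : ℝ) / (e+a+1).factorial := by
  have h1 : Complex.betaIntegral (e+1) (a+1) =
      ((∫ x in (0:ℝ)..1, x^e * (1-x)^a : ℝ) : ℂ) := by
    rw [Complex.betaIntegral, ← intervalIntegral.integral_ofReal]
    refine intervalIntegral.integral_congr fun x hx => ?_
    push_cast
    rw [add_sub_cancel_right, add_sub_cancel_right, Complex.cpow_natCast, Complex.cpow_natCast]
  have he : (0:ℝ) < (Complex.re ((e:ℂ)+1)) := by simp; positivity
  have ha : (0:ℝ) < (Complex.re ((a:ℂ)+1)) := by simp; positivity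
  have h2 := Complex.Gamma_mul_Gamma_eq_betaIntegral (s := (e:ℂ)+1) (t := (a:ℂ)+1) he ha
  have h3 : ((e:ℂ)+1) + ((a:ℂ)+1) = ((e+a+1 : ℕ) : ℂ) + 1 := by push_cast; ring
  rw [h1, h3] at h2
  have hg1 : Complex.Gamma ((e:ℂ)+1) = (e.factorial : ℂ) := by
    simpa using Complex.Gamma_nat_eq_factorial e
  have hg2 : Complex.Gamma ((a:ℂ)+1) = (a.factorial : ℂ) := by
    simpa using Complex.Gamma_nat_eq_factorial a
  have hg3 : Complex.Gamma (((e+a+1:ℕ):ℂ)+1) = ((e+a+1).factorial : ℂ) := by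
    simpa using Complex.Gamma_nat_eq_factorial (e+a+1)
  rw [hg1, hg2, hg3] at h2
  have hne : ((e+a+1).factorial : ℂ) ≠ 0 := by exact_mod_cast (e+a+1).factorial_ne_zero
  field_simp at h2 ⊢
  rw [mul_comm]; exact_mod_cast h2.symm

open Classical in
lemma integral_term (m n : ℕ) (a : Fin m → ℕ) (ha : ∀ i, a i ≤ n - 1) (hn : 1 ≤ n) :
    (∫ x in Set.univ.pi (fun _ : Fin m => Set.Icc (0:ℝ) 1),
      ∏ i, ((1 - x i)^(a i) * (x i)^((n-1) - a i)))
    = ∏ i, (((a i).factorial : ℝ) * ((n-1) - a i).factorial / n.factorial) := by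
  rw [← MeasureTheory.integral_indicator (MeasurableSet.univ_pi fun _ => measurableSet_Icc)]
  have hind : Set.indicator (Set.univ.pi (fun _ : Fin m => Set.Icc (0:ℝ) 1))
      (fun x => ∏ i, ((1 - x i)^(a i) * (x i)^((n-1) - a i)))
      = fun x => ∏ i, Set.indicator (Set.Icc (0:ℝ) 1)
          (fun t => (1 - t)^(a i) * t^((n-1) - a i)) (x i) := by
    funext x
    by_cases hx : x ∈ Set.univ.pi (fun _ : Fin m => Set.Icc (0:ℝ) 1)
    · rw [Set.indicator_of_mem hx]
      apply Finset.prod_congr rfl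
      intro i _
      rw [Set.indicator_of_mem (Set.mem_univ_pi.1 hx i)]
    · rw [Set.indicator_of_notMem hx]
      obtain ⟨i, hi⟩ : ∃ i, x i ∉ Set.Icc (0:ℝ) 1 := by
        by_contra hc
        push_neg at hc
        exact hx (Set.mem_univ_pi.2 hc)
      exact (Finset.prod_eq_zero (Finset.mem_univ i) (Set.indicator_of_notMem hi _)).symm
  rw [hind, MeasureTheory.integral_fintype_prod_volume_eq_prod]
  apply Finset.prod_congr rfl
  intro i _
  rw [MeasureTheory.integral_indicator measurableSet_Icc,
    MeasureTheory.integral_Icc_eq_integral_Ioc, ← intervalIntegral.integral_of_le zero_le_one]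
  have hcomm : (∫ x in (0:ℝ)..1, (1 - x)^(a i) * x^((n-1) - a i))
      = ∫ x in (0:ℝ)..1, x^((n-1) - a i) * (1-x)^(a i) := by
    apply intervalIntegral.integral_congr
    intro x _
    ring
  rw [hcomm, beta_nat ((n-1) - a i) (a i)]
  have heq : (n-1) - a i + a i + 1 = n := by have := ha i; omega
  rw [heq]
  ring

open Classical in
/-- For `2k-1` independent uniformly random rankings of `n` alternatives, the probability
that the fixed alternative `A_1` (index `0`) is a Condorcet winner equals
`∫_{[0,1]^{2k-1}} (1 - Q(x))^{n-1} dx`. -/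
theorem prob_fixed_condorcet_eq_integral (n k : ℕ) (hn : 1 ≤ n) (hk : 1 ≤ k) :
    ((Nat.factorial n : ℝ) ^ (2*k-1))⁻¹ *
      ((univ : Finset (Fin (2*k-1) → Equiv.Perm (Fin n))).filter
        (fun prof => ∀ b : Fin n, b ≠ ⟨0, by omega⟩ →
          k ≤ (univ.filter (fun i => prof i ⟨0, by omega⟩ < prof i b)).card)).card
    = ∫ x in Set.univ.pi (fun _ : Fin (2*k-1) => Set.Icc (0:ℝ) 1),
        (1 - Qsum k x) ^ (n-1) := by
  have hz : (0:ℕ) < n := hn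
  set z : Fin n := ⟨0, hz⟩ with hzdef
  have hcardsub : Fintype.card {b : Fin n // b ≠ z} = n - 1 := by
    have h1 := Fintype.card_subtype_compl (fun b : Fin n => b = z)
    rw [Fintype.card_subtype_eq, Fintype.card_fin] at h1
    exact h1
  -- expand the integrand
  simp_rw [integrand_expand n k hk z]
  rw [MeasureTheory.integral_finset_sum]
  · -- evaluate each term
    have hterm : ∀ p ∈ Fintype.piFinset (fun _ : {b : Fin n // b ≠ z} =>
        (univ : Finset (Fin (2*k-1))).powerset.filter (fun T => k ≤ T.card)),
        (∫ x in Set.univ.pi (fun _ : Fin (2*k-1) => Set.Icc (0:ℝ) 1),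
          ∏ i : Fin (2*k-1),
            ((1 - x i)^((univ.filter (fun b : {b : Fin n // b ≠ z} => i ∈ p b)).card)
              * (x i)^((n-1) - (univ.filter (fun b : {b : Fin n // b ≠ z} => i ∈ p b)).card)))
        = ∏ i : Fin (2*k-1),
            (((univ.filter (fun b : {b : Fin n // b ≠ z} => i ∈ p b)).card.factorial : ℝ)
              * ((n-1) - (univ.filter (fun b : {b : Fin n // b ≠ z} => i ∈ p b)).card).factorial
              / n.factorial) := by
      intro p _
      exact integral_term (2*k-1) n
        (fun i => (univ.filter (fun b : {b : Fin n // b ≠ z} => i ∈ p b)).card)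
        (fun i => by
          rw [← hcardsub, ← Finset.card_univ]
          exact Finset.card_le_card (Finset.filter_subset _ _)) hn
    rw [Finset.sum_congr rfl hterm, count_good z (2*k-1) k, match_sums z (2*k-1) k,
      Nat.cast_sum, Finset.mul_sum]
    apply Finset.sum_congr rfl
    intro p _
    rw [Finset.prod_div_distrib, Finset.prod_const, Finset.card_univ, Fintype.card_fin,
      inv_mul_eq_div]
    congr 1
    push_cast
    rfl
  · intro p _
    apply ContinuousOn.integrableOn_compact (isCompact_univ_pi (fun _ => isCompact_Icc))
    apply Continuous.continuousOn
    apply continuous_finset_prod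
    intro i _
    exact ((continuous_const.sub (continuous_apply i)).pow _).mul ((continuous_apply i).pow _)
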